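/- Let α > 0 and β > 1, let m = m(β) be the unique strictly positive solution of tanh(βm) = m, and let ν_N be the de Finetti measure. Then for every ℓ ∈ ℕ: lim_{N→∞} ∫_{m/2}^{1} (1 + m² − 2mt)^ℓ dν_N(t) = (1/2)·(1 − m²)^ℓ. -/

import Mathlib

open MeasureTheory Real Filter Set
open scoped ENNReal Topology

/-- The function `F_β`. -/
noncomputable def Fbeta (β t : ℝ) : ℝ :=
  1 / β * (1 / 2 * Real.log ((1 + t) / (1 - t))) ^ 2 + Real.log (1 - t ^ 2)

/-- The normalizing constant `Z_N = ∫_{-1}^1 e^{-x F_β(t)/2}/(1-t²) dt` (with `x = N^α`). -/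
noncomputable def Zconst (β x : ℝ) : ℝ :=
  ∫ t in Set.Ioo (-1 : ℝ) 1, Real.exp (-(x * Fbeta β t) / 2) / (1 - t ^ 2)

/-- The de Finetti measure `ν_N` with density proportional to `e^{-N^α F_β(t)/2}/(1-t²)`. -/
noncomputable def nuN (α β : ℝ) (N : ℕ) : Measure ℝ :=
  (ENNReal.ofReal (Zconst β ((N : ℝ) ^ α)))⁻¹ •
    ((volume.restrict (Set.Ioo (-1 : ℝ) 1)).withDensity fun t =>
      ENNReal.ofReal (Real.exp (-((N : ℝ) ^ α * Fbeta β t) / 2) / (1 - t ^ 2)))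

namespace CW

noncomputable def Gf (β s : ℝ) : ℝ := s ^ 2 / (2 * β) - Real.log (Real.cosh s)


lemma tanh_eq_div (s : ℝ) :
    Real.tanh s = (Real.exp s - Real.exp (-s)) / (Real.exp s + Real.exp (-s)) := by
  rw [Real.tanh_eq_sinh_div_cosh, Real.sinh_eq, Real.cosh_eq]
  have h := Real.exp_pos s; have h2 := Real.exp_pos (-s); field_simp

lemma tanh_lt_one (x : ℝ) : Real.tanh x < 1 := by
  rw [tanh_eq_div]
  rw [div_lt_one (by positivity)]
  have := Real.exp_pos (-x); linarith

lemma neg_one_lt_tanh (x : ℝ) : -1 < Real.tanh x := by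
  rw [tanh_eq_div]
  rw [lt_div_iff₀ (by positivity)]
  have := Real.exp_pos x; linarith

lemma one_sub_tanh_sq_pos (x : ℝ) : 0 < 1 - Real.tanh x ^ 2 := by
  have h1 := tanh_lt_one x
  have h2 := neg_one_lt_tanh x
  nlinarith

lemma hasDerivAt_tanh (x : ℝ) : HasDerivAt Real.tanh (1 - Real.tanh x ^ 2) x := by
  have h : HasDerivAt (fun y => Real.sinh y / Real.cosh y)
      ((Real.cosh x * Real.cosh x - Real.sinh x * Real.sinh x) / Real.cosh x ^ 2) x :=
    (Real.hasDerivAt_sinh x).div (Real.hasDerivAt_cosh x) (Real.cosh_pos x).ne'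
  have he : (fun y => Real.sinh y / Real.cosh y) = Real.tanh := by
    funext y; rw [Real.tanh_eq_sinh_div_cosh]
  rw [he] at h
  convert h using 1
  have hc := (Real.cosh_pos x).ne'
  have hsq := Real.cosh_sq_sub_sinh_sq x
  rw [Real.tanh_eq_sinh_div_cosh]
  field_simp

lemma tanh_strictMono : StrictMono Real.tanh :=
  strictMono_of_deriv_pos (fun x => by
    rw [(hasDerivAt_tanh x).deriv]; exact one_sub_tanh_sq_pos x)

lemma tanh_half_log {t : ℝ} (h1 : -1 < t) (h2 : t < 1) :
    Real.tanh (1 / 2 * Real.log ((1 + t) / (1 - t))) = t := by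
  set s := 1 / 2 * Real.log ((1 + t) / (1 - t)) with hs
  have hu : (0:ℝ) < (1 + t) / (1 - t) := by
    apply div_pos <;> linarith
  have he2 : Real.exp (2 * s) = (1 + t) / (1 - t) := by
    rw [hs]; rw [show 2 * (1 / 2 * Real.log ((1 + t) / (1 - t))) = Real.log ((1+t)/(1-t)) by ring]
    exact Real.exp_log hu
  have hE : Real.exp s * Real.exp s = (1 + t) / (1 - t) := by
    rw [← Real.exp_add] at *; rw [← he2]; ring_nf
  rw [tanh_eq_div]
  have hEpos := Real.exp_pos s
  have hEneg := Real.exp_pos (-s)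
  have hmul : Real.exp s * Real.exp (-s) = 1 := by
    rw [← Real.exp_add]; simp
  have h1t : (1:ℝ) - t ≠ 0 := by linarith
  rw [div_eq_iff (by positivity)]
  have : (Real.exp s * Real.exp s) * (1 - t) = 1 + t := by
    rw [hE]; field_simp
  nlinarith [this, hmul]

lemma artanh_tanh (s : ℝ) : 1 / 2 * Real.log ((1 + Real.tanh s) / (1 - Real.tanh s)) = s :=
  tanh_strictMono.injective (tanh_half_log (neg_one_lt_tanh s) (tanh_lt_one s))

lemma tanh_image_univ : Real.tanh '' Set.univ = Set.Ioo (-1 : ℝ) 1 := by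
  ext t
  constructor
  · rintro ⟨s, -, rfl⟩; exact ⟨neg_one_lt_tanh s, tanh_lt_one s⟩
  · rintro ⟨h1, h2⟩
    exact ⟨1 / 2 * Real.log ((1 + t) / (1 - t)), trivial, tanh_half_log h1 h2⟩

lemma tanh_image_Ici (c : ℝ) : Real.tanh '' Set.Ici c = Set.Ico (Real.tanh c) 1 := by
  ext t
  constructor
  · rintro ⟨s, hs, rfl⟩
    exact ⟨tanh_strictMono.monotone hs, tanh_lt_one s⟩
  · rintro ⟨h1, h2⟩
    refine ⟨1 / 2 * Real.log ((1 + t) / (1 - t)), ?_, tanh_half_log (lt_of_lt_of_le (neg_one_lt_tanh c) h1) h2⟩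
    by_contra h
    simp only [Set.mem_Ici, not_le] at h
    have := tanh_strictMono h
    rw [tanh_half_log (lt_of_lt_of_le (neg_one_lt_tanh c) h1) h2] at this
    exact absurd this (not_lt.mpr h1)



lemma Gf_even (β s : ℝ) : Gf β (-s) = Gf β s := by
  simp [Gf, Real.cosh_neg]

lemma continuous_Gf (β : ℝ) : Continuous (Gf β) := by
  refine Continuous.sub (by continuity) ?_
  exact Real.continuous_cosh.log (fun x => (Real.cosh_pos x).ne')

lemma continuous_tanh : Continuous Real.tanh := by
  have : Real.tanh = fun x => Real.sinh x / Real.cosh x := by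
    funext x; rw [Real.tanh_eq_sinh_div_cosh]
  rw [this]
  exact Real.continuous_sinh.div Real.continuous_cosh (fun x => (Real.cosh_pos x).ne')

lemma hasDerivAt_Gf {β : ℝ} (hβ : 0 < β) (s : ℝ) :
    HasDerivAt (Gf β) (s / β - Real.tanh s) s := by
  have h1 : HasDerivAt (fun s : ℝ => s ^ 2 / (2 * β)) (s / β) s := by
    have := (hasDerivAt_pow 2 s).div_const (2 * β)
    refine this.congr_deriv ?_
    field_simp; ring
  have h2 : HasDerivAt (fun s => Real.log (Real.cosh s)) (Real.tanh s) s := by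
    have := (Real.hasDerivAt_cosh s).log (Real.cosh_pos s).ne'
    simpa [Real.tanh_eq_sinh_div_cosh] using this
  exact h1.sub h2

lemma one_sub_tanh_sq (s : ℝ) : 1 - Real.tanh s ^ 2 = 1 / Real.cosh s ^ 2 := by
  have hc := (Real.cosh_pos s).ne'
  have := Real.cosh_sq_sub_sinh_sq s
  rw [Real.tanh_eq_sinh_div_cosh]
  field_simp
  linarith

lemma Fbeta_tanh {β : ℝ} (hβ : 0 < β) (s : ℝ) :
    Fbeta β (Real.tanh s) = 2 * Gf β s := by
  rw [Fbeta, artanh_tanh, one_sub_tanh_sq, Gf]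
  rw [show (1:ℝ)/Real.cosh s ^ 2 = (Real.cosh s ^ 2)⁻¹ from one_div _, Real.log_inv, Real.log_pow]
  field_simp
  ring

/-- tanh is strictly concave on [0, ∞) minus the line s/β. -/
lemma phi_strictConcave {β : ℝ} (hβ : 1 < β) :
    StrictConcaveOn ℝ (Set.Ici (0:ℝ)) (fun s => Real.tanh s - s / β) := by
  have hd1 : deriv (fun s => Real.tanh s - s / β) = fun s => (1 - Real.tanh s ^ 2) - 1 / β := by
    funext s
    have : HasDerivAt (fun s => Real.tanh s - s / β) ((1 - Real.tanh s ^ 2) - 1 / β) s :=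
      (hasDerivAt_tanh s).sub ((hasDerivAt_id s).div_const β)
    exact this.deriv
  apply strictConcaveOn_of_deriv2_neg (convex_Ici 0)
  · exact ((continuous_tanh.sub (continuous_id.div_const β))).continuousOn
  · intro x hx
    rw [interior_Ici] at hx
    have hd2 : deriv (deriv (fun s => Real.tanh s - s / β)) x
        = -(2 * Real.tanh x * (1 - Real.tanh x ^ 2)) := by
      rw [hd1]
      have : HasDerivAt (fun s => (1 - Real.tanh s ^ 2) - 1 / β)
          (-(2 * Real.tanh x * (1 - Real.tanh x ^ 2))) x := by
        have h := ((hasDerivAt_tanh x).pow 2).const_sub 1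
        have h2 := h.sub_const (1 / β)
        refine h2.congr_deriv ?_
        ring
      exact this.deriv
    rw [show (deriv^[2] fun s => Real.tanh s - s / β) = deriv (deriv (fun s => Real.tanh s - s / β)) by
      simp [Function.iterate_succ, Function.comp]]
    rw [hd2]
    have ht : 0 < Real.tanh x := by
      have := tanh_strictMono hx
      simpa [Real.tanh_zero] using this
    have := one_sub_tanh_sq_pos x
    nlinarith

lemma tanh_gt_div {β m : ℝ} (hβ : 1 < β) (hm : 0 < m) (htanh : Real.tanh (β * m) = m)
    {s : ℝ} (hs0 : 0 < s) (hss : s < β * m) : s / β < Real.tanh s := by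
  have hkey := phi_strictConcave hβ
  have hsm : 0 < β * m := by positivity
  set b := s / (β * m) with hb
  have hb0 : 0 < b := by positivity
  have hb1 : b < 1 := by rw [hb, div_lt_one hsm]; exact hss
  have := hkey.2 (Set.self_mem_Ici (a := (0:ℝ))) (Set.mem_Ici.mpr hsm.le)
    (ne_of_lt hsm) ?_ ?_ (by linarith : (1 - b) + b = 1)
  rotate_left
  · linarith
  · exact hb0
  · have harg : (1 - b) • (0:ℝ) + b • (β * m) = s := by
      simp only [smul_eq_mul]
      rw [hb, mul_zero, zero_add]
      exact div_mul_cancel₀ s hsm.ne'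
    rw [harg] at this
    simp only [smul_eq_mul, Real.tanh_zero, htanh] at this
    have : (1 - b) * (0 - 0 / β) + b * (m - β * m / β) < Real.tanh s - s / β := by
      convert this using 2 <;> ring_nf
    have hz : m - β * m / β = 0 := by field_simp; ring
    rw [hz] at this
    simp at this
    linarith

lemma tanh_lt_div {β m : ℝ} (hβ : 1 < β) (hm : 0 < m) (htanh : Real.tanh (β * m) = m)
    {s : ℝ} (hs : β * m < s) : Real.tanh s < s / β := by
  have hkey := phi_strictConcave hβ
  have hsm : 0 < β * m := by positivity
  have hs0 : 0 < s := lt_trans hsm hs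
  set b := (β * m) / s with hb
  have hb0 : 0 < b := by positivity
  have hb1 : b < 1 := by rw [hb, div_lt_one hs0]; exact hs
  have := hkey.2 (Set.self_mem_Ici (a := (0:ℝ))) (Set.mem_Ici.mpr hs0.le)
    (hs0.ne) (by linarith : (0:ℝ) < 1 - b) hb0 (by ring)
  have harg : (1 - b) • (0:ℝ) + b • s = β * m := by
    simp only [smul_eq_mul]
    rw [hb, mul_zero, zero_add]
    exact div_mul_cancel₀ (β * m) hs0.ne'
  rw [harg] at this
  simp only [smul_eq_mul, Real.tanh_zero, htanh] at this
  have hz : m - β * m / β = 0 := by field_simp; ring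
  have hsimp : (1 - b) * ((0:ℝ) - 0 / β) = 0 := by simp
  have hlt : b * (Real.tanh s - s / β) < 0 := by
    rw [hz, hsimp] at this; linarith
  by_contra hcon
  push_neg at hcon
  have : 0 ≤ b * (Real.tanh s - s / β) :=
    mul_nonneg hb0.le (sub_nonneg.mpr hcon)
  linarith


section mono
variable {β m : ℝ}

lemma Gf_strictAntiOn (hβ : 1 < β) (hm : 0 < m) (htanh : Real.tanh (β * m) = m) : StrictAntiOn (Gf β) (Set.Icc 0 (β * m)) := by
  apply strictAntiOn_of_deriv_neg (convex_Icc _ _) (continuous_Gf β).continuousOn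
  intro x hx
  rw [interior_Icc] at hx
  rw [(hasDerivAt_Gf (by linarith) x).deriv]
  have := tanh_gt_div hβ hm htanh hx.1 hx.2
  linarith

lemma Gf_strictMonoOn (hβ : 1 < β) (hm : 0 < m) (htanh : Real.tanh (β * m) = m) : StrictMonoOn (Gf β) (Set.Ici (β * m)) := by
  apply strictMonoOn_of_deriv_pos (convex_Ici _) (continuous_Gf β).continuousOn
  intro x hx
  rw [interior_Ici] at hx
  rw [(hasDerivAt_Gf (by linarith) x).deriv]
  have := tanh_lt_div hβ hm htanh hx
  linarith

/-- strict global minimum on `[0, ∞)` -/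
lemma Gf_min (hβ : 1 < β) (hm : 0 < m) (htanh : Real.tanh (β * m) = m) {s : ℝ} (hs : 0 ≤ s) (hne : s ≠ β * m) : Gf β (β * m) < Gf β s := by
  have hsm : 0 < β * m := mul_pos (by linarith) hm
  rcases lt_or_gt_of_ne hne with h | h
  · exact Gf_strictAntiOn hβ hm htanh ⟨hs, h.le⟩ ⟨hsm.le, le_refl _⟩ h
  · exact Gf_strictMonoOn hβ hm htanh (le_refl (β * m)) h.le h

/-- global minimum over ℝ -/
lemma Gf_min' (hβ : 1 < β) (hm : 0 < m) (htanh : Real.tanh (β * m) = m) (s : ℝ) : Gf β (β * m) ≤ Gf β s := by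
  have hsm : 0 < β * m := mul_pos (by linarith) hm
  rcases le_or_gt 0 s with h | h
  · rcases eq_or_ne s (β * m) with rfl | hne
    · exact le_refl _
    · exact (Gf_min hβ hm htanh h hne).le
  · have h2 : Gf β (β * m) ≤ Gf β (-s) := by
      rcases eq_or_ne (-s) (β * m) with he | hne
      · rw [he]
      · exact (Gf_min hβ hm htanh (by linarith) hne).le
    rwa [Gf_even] at h2

end mono

lemma log_cosh_le_abs (s : ℝ) : Real.log (Real.cosh s) ≤ |s| := by
  rw [← Real.cosh_abs]
  have h : Real.cosh |s| ≤ Real.exp |s| := by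
    rw [Real.cosh_eq]
    have := Real.exp_pos (-|s|)
    have h2 : Real.exp (-|s|) ≤ Real.exp |s| := Real.exp_le_exp.mpr (by simp [neg_le, abs_nonneg, neg_abs_le])
    linarith
  calc Real.log (Real.cosh |s|) ≤ Real.log (Real.exp |s|) :=
        Real.log_le_log (Real.cosh_pos _) h
    _ = |s| := Real.log_exp _

lemma exp_neg_xG_le {β x : ℝ} (hβ : 1 < β) (hx : 4 * β ≤ x) (s : ℝ) :
    Real.exp (-(x * Gf β s)) ≤ Real.exp (x ^ 2 / 4) * Real.exp (-s ^ 2) := by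
  rw [← Real.exp_add, Real.exp_le_exp]
  have hlc := log_cosh_le_abs s
  have hx0 : 0 < x := by linarith
  have h1 : -(x * Gf β s) = -(x * s ^ 2 / (2 * β)) + x * Real.log (Real.cosh s) := by
    rw [Gf]; ring
  rw [h1]
  have h2 : x * Real.log (Real.cosh s) ≤ x * |s| :=
    mul_le_mul_of_nonneg_left hlc hx0.le
  have h3 : x * s ^ 2 / (2 * β) ≥ 2 * s ^ 2 := by
    rw [ge_iff_le, le_div_iff₀ (by linarith : (0:ℝ) < 2 * β)]
    nlinarith [sq_nonneg s]
  have h4 : -s ^ 2 + x * |s| ≤ x ^ 2 / 4 := by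
    nlinarith [sq_nonneg (|s| - x / 2), sq_abs s]
  have h5 : s ^ 2 = |s| ^ 2 := (sq_abs s).symm
  nlinarith [sq_abs s]

lemma integrable_exp_xG {β x : ℝ} (hβ : 1 < β) (hx : 4 * β ≤ x) :
    Integrable (fun s => Real.exp (-(x * Gf β s))) := by
  have hi : Integrable (fun s : ℝ => Real.exp (x ^ 2 / 4) * Real.exp (-s ^ 2)) := by
    have := integrable_exp_neg_mul_sq (b := (1:ℝ)) one_pos
    simpa using this.const_mul (Real.exp (x ^ 2 / 4))
  apply hi.mono'
  · exact (Real.continuous_exp.comp ((continuous_const.mul (continuous_Gf β)).neg)).aestronglyMeasurable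
  · filter_upwards with s
    rw [Real.norm_eq_abs, abs_of_pos (Real.exp_pos _)]
    exact exp_neg_xG_le hβ hx s

lemma integral_exp_xG_pos {β x : ℝ} (hβ : 1 < β) (hx : 4 * β ≤ x) :
    0 < ∫ s, Real.exp (-(x * Gf β s)) := by
  rw [integral_pos_iff_support_of_nonneg (fun s => (Real.exp_pos _).le) (integrable_exp_xG hβ hx)]
  have : (Function.support fun s => Real.exp (-(x * Gf β s))) = Set.univ := by
    ext s; simp [Function.support, (Real.exp_pos _).ne']
  rw [this]
  simp

/-- reflection for set integrals -/
lemma setIntegral_neg_set (f : ℝ → ℝ) {a b : ℝ} :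
    ∫ s in Set.Icc a b, f (-s) = ∫ s in Set.Icc (-b) (-a), f s := by
  have h : Set.Icc (-b) (-a) = (fun s : ℝ => -s) '' Set.Icc a b := by
    rw [show (fun s : ℝ => -s) = Neg.neg from rfl, Set.image_neg_Icc]
  rw [h]
  rw [integral_image_eq_integral_abs_deriv_smul measurableSet_Icc
    (fun x _ => ((hasDerivAt_neg x).hasDerivWithinAt)) (fun x _ y _ h => neg_injective h) f]
  simp

lemma subst_univ {β : ℝ} (hβ : 0 < β) (x : ℝ) (g : ℝ → ℝ) :
    ∫ t in Set.Ioo (-1 : ℝ) 1, g t * (Real.exp (-(x * Fbeta β t) / 2) / (1 - t ^ 2))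
      = ∫ s, g (Real.tanh s) * Real.exp (-(x * Gf β s)) := by
  rw [← tanh_image_univ]
  rw [integral_image_eq_integral_abs_deriv_smul MeasurableSet.univ
    (fun y _ => (hasDerivAt_tanh y).hasDerivWithinAt)
    (tanh_strictMono.injective.injOn)
    (fun t => g t * (Real.exp (-(x * Fbeta β t) / 2) / (1 - t ^ 2)))]
  rw [Measure.restrict_univ]
  congr 1
  funext s
  have hpos := one_sub_tanh_sq_pos s
  rw [abs_of_pos hpos, smul_eq_mul, Fbeta_tanh hβ]
  rw [show -(x * (2 * Gf β s)) / 2 = -(x * Gf β s) by ring]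
  field_simp

lemma Zconst_eq {β : ℝ} (hβ : 0 < β) (x : ℝ) :
    Zconst β x = ∫ s, Real.exp (-(x * Gf β s)) := by
  have := subst_univ hβ x (fun _ => 1)
  simpa [Zconst] using this

lemma subst_Ici {β : ℝ} (hβ : 0 < β) (x c : ℝ) (g : ℝ → ℝ) :
    ∫ t in Set.Ico (Real.tanh c) 1, g t * (Real.exp (-(x * Fbeta β t) / 2) / (1 - t ^ 2))
      = ∫ s in Set.Ici c, g (Real.tanh s) * Real.exp (-(x * Gf β s)) := by
  rw [← tanh_image_Ici]
  rw [integral_image_eq_integral_abs_deriv_smul measurableSet_Ici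
    (fun y _ => (hasDerivAt_tanh y).hasDerivWithinAt)
    (tanh_strictMono.injective.injOn)
    (fun t => g t * (Real.exp (-(x * Fbeta β t) / 2) / (1 - t ^ 2)))]
  apply setIntegral_congr_fun measurableSet_Ici
  intro s _
  have hpos := one_sub_tanh_sq_pos s
  simp only []
  rw [abs_of_pos hpos, smul_eq_mul, Fbeta_tanh hβ]
  rw [show -(x * (2 * Gf β s)) / 2 = -(x * Gf β s) by ring]
  field_simp

/-- the measurable density as an `ℝ≥0`-valued function -/
lemma density_measurable (β x : ℝ) :
    Measurable (fun t : ℝ => (Real.exp (-(x * Fbeta β t) / 2) / (1 - t ^ 2)).toNNReal) := by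
  apply Measurable.real_toNNReal
  apply Measurable.div
  · apply Real.measurable_exp.comp
    apply Measurable.div_const
    apply Measurable.neg
    apply Measurable.const_mul
    unfold Fbeta
    apply Measurable.add
    · apply Measurable.const_mul
      apply Measurable.pow_const
      apply Measurable.const_mul
      exact Real.measurable_log.comp ((measurable_const.add measurable_id).div
        (measurable_const.sub measurable_id))
    · exact Real.measurable_log.comp (measurable_const.sub (measurable_id.pow_const 2))
  · exact measurable_const.sub (measurable_id.pow_const 2)

lemma nu_integral_eq {β m : ℝ} (hβ : 1 < β) (hm : 0 < m) (hm1 : m < 1) (x : ℝ) (g : ℝ → ℝ) :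
    (∫ t in Set.Icc (m / 2) 1, g t
        ∂((ENNReal.ofReal (Zconst β x))⁻¹ •
          ((volume.restrict (Set.Ioo (-1 : ℝ) 1)).withDensity fun t =>
            ENNReal.ofReal (Real.exp (-(x * Fbeta β t) / 2) / (1 - t ^ 2)))))
      = (Zconst β x)⁻¹ *
        ∫ t in Set.Ico (m / 2) 1, g t * (Real.exp (-(x * Fbeta β t) / 2) / (1 - t ^ 2)) := by
  have hZnn : (0:ℝ) ≤ Zconst β x := by
    apply setIntegral_nonneg measurableSet_Ioo
    intro t ht
    apply div_nonneg (Real.exp_pos _).le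
    nlinarith [ht.1, ht.2]
  rw [Measure.restrict_smul, integral_smul_measure, ENNReal.toReal_inv,
    ENNReal.toReal_ofReal hZnn, smul_eq_mul]
  congr 1
  have hset : Set.Icc (m / 2) 1 ∩ Set.Ioo (-1 : ℝ) 1 = Set.Ico (m / 2) 1 := by
    ext t
    simp only [Set.mem_inter_iff, Set.mem_Icc, Set.mem_Ioo, Set.mem_Ico]
    constructor
    · rintro ⟨⟨h1, h2⟩, h3, h4⟩; exact ⟨h1, h4⟩
    · rintro ⟨h1, h2⟩; exact ⟨⟨h1, h2.le⟩, by linarith, h2⟩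
  have hco : (fun t : ℝ => ENNReal.ofReal (Real.exp (-(x * Fbeta β t) / 2) / (1 - t ^ 2)))
      = fun t => ((fun t : ℝ => (Real.exp (-(x * Fbeta β t) / 2) / (1 - t ^ 2)).toNNReal) t : ℝ≥0∞) := by
    rfl
  calc ∫ t in Set.Icc (m / 2) 1, g t
        ∂((volume.restrict (Set.Ioo (-1 : ℝ) 1)).withDensity fun t =>
            ENNReal.ofReal (Real.exp (-(x * Fbeta β t) / 2) / (1 - t ^ 2)))
      = ∫ t, g t ∂((volume.restrict (Set.Ico (m/2) 1)).withDensity fun t =>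
            ENNReal.ofReal (Real.exp (-(x * Fbeta β t) / 2) / (1 - t ^ 2))) := by
        rw [restrict_withDensity measurableSet_Icc, Measure.restrict_restrict measurableSet_Icc,
          hset]
    _ = ∫ t in Set.Ico (m/2) 1,
          ((Real.exp (-(x * Fbeta β t) / 2) / (1 - t ^ 2)).toNNReal : ℝ) • g t := by
        rw [hco, integral_withDensity_eq_integral_smul (density_measurable β x)]
        rfl
    _ = ∫ t in Set.Ico (m/2) 1, g t * (Real.exp (-(x * Fbeta β t) / 2) / (1 - t ^ 2)) := by
        apply setIntegral_congr_fun measurableSet_Ico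
        intro t ht
        have hpos : (0:ℝ) ≤ Real.exp (-(x * Fbeta β t) / 2) / (1 - t ^ 2) := by
          apply div_nonneg (Real.exp_pos _).le
          have h1 : -1 < t := by cases ht; linarith
          have h2 : t < 1 := ht.2
          nlinarith
        simp only [NNReal.smul_def, Real.coe_toNNReal _ hpos, smul_eq_mul]
        ring



lemma exp_tail_bound {x x₀ G c : ℝ} (hx : x₀ ≤ x) (hG : c ≤ G) :
    Real.exp (-(x * G)) ≤ Real.exp (-((x - x₀) * c)) * Real.exp (-(x₀ * G)) := by
  rw [← Real.exp_add, Real.exp_le_exp]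
  nlinarith [mul_nonneg (sub_nonneg.mpr hx) (sub_nonneg.mpr hG)]

set_option maxHeartbeats 1000000 in
lemma main_tendsto {β m : ℝ} (hβ : 1 < β) (hm : 0 < m) (hm1 : m < 1)
    (htanh : Real.tanh (β * m) = m) (ℓ : ℕ) :
    Tendsto (fun x : ℝ =>
        (∫ s in Set.Ici (1 / 2 * Real.log ((1 + m / 2) / (1 - m / 2))),
          (1 + m ^ 2 - 2 * m * Real.tanh s) ^ ℓ * Real.exp (-(x * Gf β s)))
        / (∫ s, Real.exp (-(x * Gf β s)))) atTop
      (𝓝 ((1 - m ^ 2) ^ ℓ / 2)) := by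
  have hc_def : ∃ c : ℝ, c = 1 / 2 * Real.log ((1 + m / 2) / (1 - m / 2)) := ⟨_, rfl⟩
  obtain ⟨c, hc_def⟩ := hc_def
  rw [← hc_def]
  set gl : ℝ → ℝ := fun s => (1 + m ^ 2 - 2 * m * Real.tanh s) ^ ℓ with hgl_def
  set L : ℝ := (1 - m ^ 2) ^ ℓ with hL_def
  set Mb : ℝ := 4 ^ ℓ with hMb_def
  set sstar : ℝ := β * m with hsstar_def
  -- basics
  have hsm : 0 < sstar := mul_pos (by linarith) hm
  have hc_tanh : Real.tanh c = m / 2 := by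
    rw [hc_def]; exact tanh_half_log (by linarith) (by linarith)
  have hc0 : 0 < c := by
    have : Real.tanh 0 < Real.tanh c := by
      rw [Real.tanh_zero, hc_tanh]; linarith
    exact tanh_strictMono.lt_iff_lt.mp this
  have hcs : c < sstar := by
    have : Real.tanh c < Real.tanh sstar := by
      rw [hc_tanh, htanh]; linarith
    exact tanh_strictMono.lt_iff_lt.mp this
  have hgl_nonneg : ∀ s, 0 ≤ gl s := by
    intro s
    apply pow_nonneg
    nlinarith [tanh_lt_one s, hm]
  have hgl_le : ∀ s, gl s ≤ Mb := by
    intro s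
    apply pow_le_pow_left₀ (by nlinarith [tanh_lt_one s, hm])
    nlinarith [neg_one_lt_tanh s, tanh_lt_one s, hm]
  have hgl_cont : Continuous gl :=
    ((continuous_const.sub ((continuous_const.mul continuous_tanh)))).pow ℓ
  have hgl_star : gl sstar = L := by
    simp only [hgl_def, hL_def, htanh]
    congr 1
    ring
  have hL_nonneg : 0 ≤ L := pow_nonneg (by nlinarith) ℓ
  have hMb_pos : (0:ℝ) < Mb := by rw [hMb_def]; positivity
  -- start of epsilon argument
  rw [Metric.tendsto_atTop]
  intro ε hε
  set ε₂ : ℝ := ε / (2 * Mb + L + 1) with hε₂_def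
  have hε₂pos : 0 < ε₂ := by
    apply div_pos hε; nlinarith
  have hMbε : (2 * Mb + L) * ε₂ ≤ ε := by
    have hD : (0:ℝ) < 2 * Mb + L + 1 := by nlinarith
    rw [hε₂_def, mul_comm, div_mul_eq_mul_div, div_le_iff₀ hD]
    nlinarith
  -- continuity of gl at sstar
  obtain ⟨δ₀, hδ₀, hgl0⟩ := Metric.continuousAt_iff.mp hgl_cont.continuousAt ε hε
  obtain ⟨δ, hδpos, hδδ₀, hδc⟩ : ∃ δ : ℝ, 0 < δ ∧ δ < δ₀ ∧ c < sstar - δ := by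
    refine ⟨min (δ₀ / 2) ((sstar - c) / 2), lt_min (by linarith) (by linarith), ?_, ?_⟩
    · have := min_le_left (δ₀ / 2) ((sstar - c) / 2); linarith
    · have := min_le_right (δ₀ / 2) ((sstar - c) / 2); linarith
  have hsl0 : 0 < sstar - δ := lt_trans hc0 hδc
  have hglJ : ∀ s ∈ Set.Icc (sstar - δ) (sstar + δ), |gl s - L| ≤ ε := by
    intro s hs
    rw [← hgl_star]
    have hd : dist s sstar < δ₀ := by
      rw [Real.dist_eq, abs_lt]
      constructor <;> [linarith [hs.1]; linarith [hs.2]]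
    have := hgl0 hd
    rw [Real.dist_eq] at this
    exact this.le
  -- the gap η
  set Gstar : ℝ := Gf β sstar with hGstar_def
  set η : ℝ := min (Gf β (sstar - δ)) (Gf β (sstar + δ)) - Gstar with hη_def
  have hηpos : 0 < η := by
    have h1 : Gstar < Gf β (sstar - δ) :=
      Gf_min hβ hm htanh hsl0.le (by intro h; change sstar - δ = sstar at h; linarith)
    have h2 : Gstar < Gf β (sstar + δ) :=
      Gf_min hβ hm htanh (by linarith) (by intro h; change sstar + δ = sstar at h; linarith)
    rw [hη_def]
    rcases min_cases (Gf β (sstar - δ)) (Gf β (sstar + δ)) with ⟨h, _⟩ | ⟨h, _⟩ <;>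
      rw [h] <;> linarith
  -- bound outside the two windows
  have hout0 : ∀ s : ℝ, 0 ≤ s → s ∉ Set.Icc (sstar - δ) (sstar + δ) → Gstar + η ≤ Gf β s := by
    intro s hs0 hs
    rw [Set.mem_Icc, not_and_or, not_le, not_le] at hs
    rcases hs with h | h
    · have hlt : Gf β (sstar - δ) < Gf β s :=
        Gf_strictAntiOn hβ hm htanh ⟨hs0, by linarith⟩ ⟨hsl0.le, by linarith⟩ h
      have : η ≤ Gf β (sstar - δ) - Gstar := by
        rw [hη_def]
        have := min_le_left (Gf β (sstar - δ)) (Gf β (sstar + δ)); linarith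
      linarith
    · have hlt : Gf β (sstar + δ) < Gf β s :=
        Gf_strictMonoOn hβ hm htanh (Set.mem_Ici.mpr (by linarith))
          (Set.mem_Ici.mpr (by linarith)) h
      have : η ≤ Gf β (sstar + δ) - Gstar := by
        rw [hη_def]
        have := min_le_right (Gf β (sstar - δ)) (Gf β (sstar + δ)); linarith
      linarith
  have hout : ∀ s : ℝ, s ∉ Set.Icc (sstar - δ) (sstar + δ) →
      s ∉ Set.Icc (-(sstar + δ)) (-(sstar - δ)) → Gstar + η ≤ Gf β s := by
    intro s h1 h2
    rcases le_or_gt 0 s with hs0 | hs0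
    · exact hout0 s hs0 h1
    · have hns : -s ∉ Set.Icc (sstar - δ) (sstar + δ) := by
        intro hmem
        apply h2
        rw [Set.mem_Icc] at hmem ⊢
        constructor <;> linarith [hmem.1, hmem.2]
      have := hout0 (-s) (by linarith) hns
      rwa [Gf_even] at this
  -- window for the lower bound on A
  obtain ⟨δ₁, hδ₁, hG1⟩ := Metric.continuousAt_iff.mp (continuous_Gf β).continuousAt (η / 2)
    (by linarith)
  obtain ⟨δ', hδ'pos, hδ'le, hδ'δ₁⟩ : ∃ δ' : ℝ, 0 < δ' ∧ δ' ≤ δ ∧ δ' < δ₁ := by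
    refine ⟨min δ (δ₁ / 2), lt_min hδpos (by linarith), min_le_left _ _, ?_⟩
    have := min_le_right δ (δ₁ / 2); linarith
  have hGlo : ∀ s ∈ Set.Icc (sstar - δ') (sstar + δ'), Gf β s ≤ Gstar + η / 2 := by
    intro s hs
    have hd : dist s sstar < δ₁ := by
      rw [Real.dist_eq, abs_lt]
      constructor <;> linarith [hs.1, hs.2]
    have := hG1 hd
    rw [Real.dist_eq, abs_lt] at this
    rw [hGstar_def]
    linarith [this.2]
  -- constants
  set x₀ : ℝ := 4 * β with hx₀_def
  set K : ℝ := ∫ s, Real.exp (-(x₀ * Gf β s)) with hK_def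
  have hK0 : 0 ≤ K := integral_nonneg (fun s => (Real.exp_pos _).le)
  have hIK : Integrable (fun s => Real.exp (-(x₀ * Gf β s))) :=
    integrable_exp_xG hβ (le_refl _)
  -- eventual condition
  have hgrow : Tendsto (fun x : ℝ => Real.exp (x * (η / 2) + -(x₀ * (Gstar + η)))) atTop atTop :=
    Real.tendsto_exp_atTop.comp (tendsto_atTop_add_const_right _ _
      (tendsto_id.atTop_mul_const (by linarith)))
  have hev := (hgrow.eventually_ge_atTop (K / (2 * δ' * ε₂))).and
    (eventually_ge_atTop (x₀ + 1))
  rw [eventually_atTop] at hev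
  obtain ⟨X, hX⟩ := hev
  refine ⟨X, fun x hx => ?_⟩
  obtain ⟨hcond, hxx⟩ := hX x hx
  have hxx₀ : x₀ ≤ x := by linarith
  have hx0 : 0 < x := by
    have : (0:ℝ) < x₀ := by rw [hx₀_def]; linarith
    linarith
  -- integrability at x
  have hI : Integrable (fun s => Real.exp (-(x * Gf β s))) := integrable_exp_xG hβ hxx₀
  have hIg : Integrable (fun s => gl s * Real.exp (-(x * Gf β s))) := by
    apply hI.bdd_mul hgl_cont.aestronglyMeasurable
    exact ae_of_all _ (fun s => (by rw [Real.norm_eq_abs, abs_of_nonneg (hgl_nonneg s)]; exact hgl_le s : ‖gl s‖ ≤ Mb))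
  -- key quantities
  set A : ℝ := ∫ s in Set.Icc (sstar - δ) (sstar + δ), Real.exp (-(x * Gf β s)) with hA_def
  set DEN : ℝ := ∫ s, Real.exp (-(x * Gf β s)) with hDEN_def
  set NUM : ℝ := ∫ s in Set.Ici c, gl s * Real.exp (-(x * Gf β s)) with hNUM_def
  set U : Set ℝ := Set.Icc (sstar - δ) (sstar + δ) ∪ Set.Icc (-(sstar + δ)) (-(sstar - δ))
    with hU_def
  have hU_meas : MeasurableSet U := (measurableSet_Icc).union measurableSet_Icc
  set T : ℝ := ∫ s in Uᶜ, Real.exp (-(x * Gf β s)) with hT_def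
  -- lower bound on A
  have hA_lb : 2 * δ' * Real.exp (-(x * (Gstar + η / 2))) ≤ A := by
    have hsub : Set.Icc (sstar - δ') (sstar + δ') ⊆ Set.Icc (sstar - δ) (sstar + δ) :=
      Set.Icc_subset_Icc (by linarith) (by linarith)
    have h1 : ∫ _ in Set.Icc (sstar - δ') (sstar + δ'), Real.exp (-(x * (Gstar + η / 2)))
        ≤ ∫ s in Set.Icc (sstar - δ') (sstar + δ'), Real.exp (-(x * Gf β s)) := by
      apply setIntegral_mono_on
      · exact integrableOn_const measure_Icc_lt_top.ne
      · exact hI.integrableOn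
      · exact measurableSet_Icc
      · intro s hs
        apply Real.exp_le_exp.mpr
        have := hGlo s hs
        nlinarith
    have h2 : ∫ s in Set.Icc (sstar - δ') (sstar + δ'), Real.exp (-(x * Gf β s)) ≤ A := by
      apply setIntegral_mono_set hI.integrableOn
      · filter_upwards with s using (Real.exp_pos _).le
      · exact HasSubset.Subset.eventuallyLE hsub
    have h3 : ∫ _ in Set.Icc (sstar - δ') (sstar + δ'), Real.exp (-(x * (Gstar + η / 2)))
        = 2 * δ' * Real.exp (-(x * (Gstar + η / 2))) := by
      rw [setIntegral_const, Real.volume_real_Icc_of_le (by linarith), smul_eq_mul]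
      ring_nf
    linarith
  have hA_pos : 0 < A := lt_of_lt_of_le (by positivity) hA_lb
  -- tail bound
  have hT_nonneg : 0 ≤ T := setIntegral_nonneg hU_meas.compl (fun s _ => (Real.exp_pos _).le)
  have hT_ub : T ≤ Real.exp (-((x - x₀) * (Gstar + η))) * K := by
    have hptwise : ∀ s ∈ Uᶜ, Real.exp (-(x * Gf β s))
        ≤ Real.exp (-((x - x₀) * (Gstar + η))) * Real.exp (-(x₀ * Gf β s)) := by
      intro s hs
      rw [Set.mem_compl_iff, hU_def, Set.mem_union, not_or] at hs
      exact exp_tail_bound hxx₀ (hout s hs.1 hs.2)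
    have h1 : T ≤ ∫ s in Uᶜ, Real.exp (-((x - x₀) * (Gstar + η))) * Real.exp (-(x₀ * Gf β s)) := by
      apply setIntegral_mono_on hI.integrableOn
        ((hIK.const_mul _).integrableOn) hU_meas.compl hptwise
    have h2 : ∫ s in Uᶜ, Real.exp (-((x - x₀) * (Gstar + η))) * Real.exp (-(x₀ * Gf β s))
        ≤ Real.exp (-((x - x₀) * (Gstar + η))) * K := by
      rw [integral_const_mul]
      apply mul_le_mul_of_nonneg_left _ (Real.exp_pos _).le
      rw [hK_def]
      exact setIntegral_le_integral hIK (by filter_upwards with s using (Real.exp_pos _).le)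
    linarith
  have hTA : T ≤ ε₂ * A := by
    have hKle : K ≤ 2 * δ' * ε₂ * Real.exp (x * (η / 2) + -(x₀ * (Gstar + η))) := by
      rw [div_le_iff₀ (by positivity)] at hcond
      calc K ≤ Real.exp (x * (η / 2) + -(x₀ * (Gstar + η))) * (2 * δ' * ε₂) := hcond
        _ = 2 * δ' * ε₂ * Real.exp (x * (η / 2) + -(x₀ * (Gstar + η))) := by ring
    have hcomb : Real.exp (-((x - x₀) * (Gstar + η))) *
        (2 * δ' * ε₂ * Real.exp (x * (η / 2) + -(x₀ * (Gstar + η))))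
        = ε₂ * (2 * δ' * Real.exp (-(x * (Gstar + η / 2)))) := by
      rw [show (2 : ℝ) * δ' * ε₂ * Real.exp (x * (η / 2) + -(x₀ * (Gstar + η)))
          = ε₂ * (2 * δ') * Real.exp (x * (η / 2) + -(x₀ * (Gstar + η))) by ring]
      rw [mul_comm (Real.exp (-((x - x₀) * (Gstar + η))))]
      rw [mul_assoc, ← Real.exp_add]
      rw [show x * (η / 2) + -(x₀ * (Gstar + η)) + -((x - x₀) * (Gstar + η))
          = -(x * (Gstar + η / 2)) by ring]
      ring
    calc T ≤ Real.exp (-((x - x₀) * (Gstar + η))) * K := hT_ub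
      _ ≤ Real.exp (-((x - x₀) * (Gstar + η))) *
            (2 * δ' * ε₂ * Real.exp (x * (η / 2) + -(x₀ * (Gstar + η)))) :=
          mul_le_mul_of_nonneg_left hKle (Real.exp_pos _).le
      _ = ε₂ * (2 * δ' * Real.exp (-(x * (Gstar + η / 2)))) := hcomb
      _ ≤ ε₂ * A := mul_le_mul_of_nonneg_left hA_lb hε₂pos.le
  -- decomposition of DEN
  have hAneg : ∫ s in Set.Icc (-(sstar + δ)) (-(sstar - δ)), Real.exp (-(x * Gf β s)) = A := by
    rw [← setIntegral_neg_set (fun s => Real.exp (-(x * Gf β s)))]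
    rw [hA_def]
    congr 1
    funext s
    rw [Gf_even]
  have hdisj : Disjoint (Set.Icc (sstar - δ) (sstar + δ))
      (Set.Icc (-(sstar + δ)) (-(sstar - δ))) := by
    apply Set.disjoint_left.mpr
    intro s hs1 hs2
    rw [Set.mem_Icc] at hs1 hs2
    linarith [hs1.1, hs2.2]
  have hDENeq : DEN = 2 * A + T := by
    have h1 : DEN = (∫ s in U, Real.exp (-(x * Gf β s))) + T :=
      (integral_add_compl hU_meas hI).symm
    have h2 : ∫ s in U, Real.exp (-(x * Gf β s)) = A + A := by
      rw [hU_def, setIntegral_union hdisj measurableSet_Icc hI.integrableOn hI.integrableOn,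
        hAneg]
    rw [h1, h2]; ring
  have hDEN_pos : 0 < DEN := by rw [hDENeq]; linarith
  -- decomposition of NUM
  have hJsub : Set.Icc (sstar - δ) (sstar + δ) ⊆ Set.Ici c := fun s hs =>
    le_trans hδc.le hs.1
  set B : ℝ := ∫ s in Set.Ici c \ Set.Icc (sstar - δ) (sstar + δ),
    gl s * Real.exp (-(x * Gf β s)) with hB_def
  set A' : ℝ := ∫ s in Set.Icc (sstar - δ) (sstar + δ), gl s * Real.exp (-(x * Gf β s))
    with hA'_def
  have hNUMeq : NUM = A' + B := by
    rw [hB_def, integral_diff measurableSet_Icc hIg.integrableOn hJsub]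
    ring
  have hB_nonneg : 0 ≤ B :=
    setIntegral_nonneg (measurableSet_Ici.diff measurableSet_Icc)
      (fun s _ => mul_nonneg (hgl_nonneg s) (Real.exp_pos _).le)
  have hB_le : B ≤ Mb * T := by
    have h1 : B ≤ ∫ s in Set.Ici c \ Set.Icc (sstar - δ) (sstar + δ),
        Mb * Real.exp (-(x * Gf β s)) := by
      apply setIntegral_mono_on hIg.integrableOn ((hI.const_mul Mb).integrableOn)
        (measurableSet_Ici.diff measurableSet_Icc)
      intro s _
      exact mul_le_mul_of_nonneg_right (hgl_le s) (Real.exp_pos _).le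
    have hsub : Set.Ici c \ Set.Icc (sstar - δ) (sstar + δ) ⊆ Uᶜ := by
      intro s hs
      rw [Set.mem_compl_iff, hU_def, Set.mem_union, not_or]
      refine ⟨hs.2, ?_⟩
      intro hmem
      rw [Set.mem_Icc] at hmem
      have hci := hs.1
      rw [Set.mem_Ici] at hci
      linarith [hmem.2]
    have h2 : ∫ s in Set.Ici c \ Set.Icc (sstar - δ) (sstar + δ), Mb * Real.exp (-(x * Gf β s))
        ≤ ∫ s in Uᶜ, Mb * Real.exp (-(x * Gf β s)) := by
      apply setIntegral_mono_set ((hI.const_mul Mb).integrableOn)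
      · filter_upwards with s using mul_nonneg hMb_pos.le (Real.exp_pos _).le
      · exact HasSubset.Subset.eventuallyLE hsub
    have h3 : ∫ s in Uᶜ, Mb * Real.exp (-(x * Gf β s)) = Mb * T := by
      rw [hT_def, integral_const_mul]
    linarith
  have hA'A : |A' - L * A| ≤ ε * A := by
    have heq : A' - L * A = ∫ s in Set.Icc (sstar - δ) (sstar + δ),
        (gl s - L) * Real.exp (-(x * Gf β s)) := by
      rw [hA'_def, hA_def, ← integral_const_mul]
      rw [← integral_sub hIg.integrableOn ((hI.const_mul L).integrableOn)]
      congr 1; funext s; ring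
    rw [heq]
    have h1 : |∫ s in Set.Icc (sstar - δ) (sstar + δ), (gl s - L) * Real.exp (-(x * Gf β s))|
        ≤ ∫ s in Set.Icc (sstar - δ) (sstar + δ), |gl s - L| * Real.exp (-(x * Gf β s)) := by
      have := norm_integral_le_integral_norm
        (μ := volume.restrict (Set.Icc (sstar - δ) (sstar + δ)))
        (fun s => (gl s - L) * Real.exp (-(x * Gf β s)))
      simpa [Real.norm_eq_abs] using this
    have h2 : ∫ s in Set.Icc (sstar - δ) (sstar + δ), |gl s - L| * Real.exp (-(x * Gf β s))
        ≤ ∫ s in Set.Icc (sstar - δ) (sstar + δ), ε * Real.exp (-(x * Gf β s)) := by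
      apply setIntegral_mono_on
      · have hfun : (fun s => |gl s - L| * Real.exp (-(x * Gf β s)))
            = fun s => |gl s * Real.exp (-(x * Gf β s)) - L * Real.exp (-(x * Gf β s))| := by
          funext s
          rw [show gl s * Real.exp (-(x * Gf β s)) - L * Real.exp (-(x * Gf β s))
              = (gl s - L) * Real.exp (-(x * Gf β s)) from by ring, abs_mul,
            abs_of_pos (Real.exp_pos _)]
        rw [hfun]
        exact ((hIg.sub (hI.const_mul L)).abs).integrableOn
      · exact (hI.const_mul ε).integrableOn
      · exact measurableSet_Icc
      · intro s hs
        exact mul_le_mul_of_nonneg_right (hglJ s hs) (Real.exp_pos _).le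
    have h3 : ∫ s in Set.Icc (sstar - δ) (sstar + δ), ε * Real.exp (-(x * Gf β s)) = ε * A := by
      rw [hA_def, integral_const_mul]
    linarith
  -- final algebra
  have hNA : |NUM - L * A| ≤ ε * A + Mb * (ε₂ * A) := by
    have h1 : |NUM - L * A| ≤ |A' - L * A| + B := by
      rw [hNUMeq]
      calc |A' + B - L * A| ≤ |A' - L * A| + |B| := by
            rw [show A' + B - L * A = (A' - L * A) + B by ring]
            exact abs_add_le _ _
        _ = |A' - L * A| + B := by rw [abs_of_nonneg hB_nonneg]
    have h2 : B ≤ Mb * (ε₂ * A) := by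
      calc B ≤ Mb * T := hB_le
        _ ≤ Mb * (ε₂ * A) := mul_le_mul_of_nonneg_left hTA hMb_pos.le
    linarith
  have h2 : |2 * NUM - L * DEN| ≤ 3 * ε * A := by
    have he : 2 * NUM - L * DEN = 2 * (NUM - L * A) - L * T := by
      rw [hDENeq]; ring
    rw [he]
    have hstep : |2 * (NUM - L * A) - L * T| ≤ 2 * |NUM - L * A| + L * T := by
      calc |2 * (NUM - L * A) - L * T| ≤ |2 * (NUM - L * A)| + |L * T| := abs_sub _ _
        _ = 2 * |NUM - L * A| + L * T := by
            rw [abs_mul, abs_mul, abs_of_nonneg hL_nonneg, abs_of_nonneg hT_nonneg,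
              abs_of_nonneg (by norm_num : (0:ℝ) ≤ 2)]
    have hLT : L * T ≤ L * (ε₂ * A) := mul_le_mul_of_nonneg_left hTA hL_nonneg
    have hMA : (2 * Mb + L) * ε₂ * A ≤ ε * A :=
      mul_le_mul_of_nonneg_right hMbε hA_pos.le
    have hexp : (2 * Mb + L) * ε₂ * A = 2 * (Mb * (ε₂ * A)) + L * (ε₂ * A) := by ring
    linarith
  have hfinal : |NUM / DEN - L / 2| ≤ 3 * ε / 4 := by
    have h1 : NUM / DEN - L / 2 = (2 * NUM - L * DEN) / (2 * DEN) := by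
      field_simp
    rw [h1, abs_div, abs_of_pos (by linarith : (0:ℝ) < 2 * DEN)]
    have h4A : 4 * A ≤ 2 * DEN := by rw [hDENeq]; linarith
    have hq : |2 * NUM - L * DEN| / (2 * DEN) ≤ (3 * ε * A) / (4 * A) :=
      div_le_div₀ (by positivity) h2 (by linarith) h4A
    have heq : (3 * ε * A) / (4 * A) = 3 * ε / 4 := by
      field_simp
    linarith [hq, heq ▸ hq]
  rw [Real.dist_eq]
  calc |NUM / DEN - L / 2| ≤ 3 * ε / 4 := hfinal
    _ < ε := by linarith


end CW

/-- For `α > 0`, `β > 1`, every `ℓ ∈ ℕ`: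
`lim_{N→∞} ∫_{m/2}^1 (1 + m² - 2mt)^ℓ dν_N(t) = (1/2)(1-m²)^ℓ`. -/
theorem nuN_moment_limit (α β m : ℝ) (hα : 0 < α) (hβ : 1 < β)
    (hm : 0 < m) (htanh : Real.tanh (β * m) = m) (ℓ : ℕ) :
    Tendsto
      (fun N : ℕ => ∫ t in Set.Icc (m / 2) 1, (1 + m ^ 2 - 2 * m * t) ^ ℓ ∂(nuN α β N))
      atTop (nhds (1 / 2 * (1 - m ^ 2) ^ ℓ)) := by
  have hm1 : m < 1 := by rw [← htanh]; exact CW.tanh_lt_one _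
  have hβ0 : (0:ℝ) < β := by linarith
  have hc_tanh : Real.tanh (1 / 2 * Real.log ((1 + m / 2) / (1 - m / 2))) = m / 2 :=
    CW.tanh_half_log (by linarith) (by linarith)
  have hkey : ∀ N : ℕ,
      (∫ t in Set.Icc (m / 2) 1, (1 + m ^ 2 - 2 * m * t) ^ ℓ ∂(nuN α β N))
      = (∫ s in Set.Ici (1 / 2 * Real.log ((1 + m / 2) / (1 - m / 2))),
          (1 + m ^ 2 - 2 * m * Real.tanh s) ^ ℓ * Real.exp (-(((N:ℝ) ^ α) * CW.Gf β s)))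
        / (∫ s, Real.exp (-(((N:ℝ) ^ α) * CW.Gf β s))) := by
    intro N
    rw [nuN]
    rw [CW.nu_integral_eq hβ hm hm1 ((N:ℝ) ^ α) (fun t => (1 + m ^ 2 - 2 * m * t) ^ ℓ)]
    rw [show Set.Ico (m / 2) 1
        = Set.Ico (Real.tanh (1 / 2 * Real.log ((1 + m / 2) / (1 - m / 2)))) 1 by rw [hc_tanh]]
    rw [CW.subst_Ici hβ0 ((N:ℝ) ^ α) _ (fun t => (1 + m ^ 2 - 2 * m * t) ^ ℓ)]
    rw [CW.Zconst_eq hβ0 ((N:ℝ) ^ α), inv_mul_eq_div]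
  have hmain := CW.main_tendsto hβ hm hm1 htanh ℓ
  have hcomp : Tendsto (fun N : ℕ => ((N:ℝ)) ^ α) atTop atTop :=
    (tendsto_rpow_atTop hα).comp tendsto_natCast_atTop_atTop
  have hfin := hmain.comp hcomp
  rw [show (1:ℝ) / 2 * (1 - m ^ 2) ^ ℓ = (1 - m ^ 2) ^ ℓ / 2 by ring]
  exact Tendsto.congr (fun N => (hkey N).symm) hfin
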